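/- Integrality of the restriction: for all u, v ∈ I(d,n), the Vandermonde product VDM(v) divides D(u,v) in the polynomial ring R = ℤ[ε_1,…,ε_n]; equivalently, E(u,v) := D(u,v)/VDM(v) is a polynomial. -/

import Mathlib

noncomputable section

/-- The variable `ε_j` of the polynomial ring `ℤ[ε_1, …, ε_n]` (junk value `0`
for `j` outside `{1, …, n}`). -/
def eps (n j : ℕ) : MvPolynomial (Fin n) ℤ :=
  if h : 1 ≤ j ∧ j ≤ n then MvPolynomial.X ⟨j - 1, by omega⟩ else 0

/-- `mu n k r p` is `μ_r^k(p) = ∏_{j=k}^{r} (ε_j − ε_p)`, the empty product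
(when `k > r`) being `1`. -/
def mu (n k r p : ℕ) : MvPolynomial (Fin n) ℤ :=
  ∏ j ∈ Finset.Icc k r, (eps n j - eps n p)

/-- The Vandermonde product `VDM(v) = ∏_{1 ≤ i < j ≤ d} (ε_{v_j} − ε_{v_i})`. -/
def vdm (n d : ℕ) (v : Fin d → ℕ) : MvPolynomial (Fin n) ℤ :=
  ∏ p ∈ Finset.univ.filter (fun p : Fin d × Fin d => p.1 < p.2),
    (eps n (v p.2) - eps n (v p.1))

/-- `D(u,v)`: the determinant of the `d×d` matrix whose `(i,j)`-entry is `μ_n^{u_i+1}(v_j)`. -/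
def Ddet (n d : ℕ) (u v : Fin d → ℕ) : MvPolynomial (Fin n) ℤ :=
  Matrix.det (Matrix.of fun i j : Fin d => mu n (u i + 1) n (v j))

open MvPolynomial

/-- Products of pairwise non-dividing primes each dividing `z` divide `z`. -/
lemma prod_primes_dvd' {α : Type*} [CommMonoidWithZero α] {ι : Type*} [DecidableEq ι]
    (s : Finset ι) (f : ι → α) (z : α) (hp : ∀ i ∈ s, Prime (f i))
    (hpair : ∀ i ∈ s, ∀ j ∈ s, i ≠ j → ¬ f i ∣ f j) (hdvd : ∀ i ∈ s, f i ∣ z) :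
    (∏ i ∈ s, f i) ∣ z := by
  induction s using Finset.induction_on generalizing z with
  | empty => simpa using one_dvd z
  | @insert a s' ha ih =>
    obtain ⟨w, hw⟩ := hdvd a (Finset.mem_insert_self a s')
    have hw' : ∀ i ∈ s', f i ∣ w := by
      intro i hi
      have hia : i ≠ a := fun h => ha (h ▸ hi)
      have hpi := hp i (Finset.mem_insert_of_mem hi)
      have hdiv : f i ∣ f a * w := hw ▸ hdvd i (Finset.mem_insert_of_mem hi)
      rcases hpi.2.2 _ _ hdiv with h | h
      · exact absurd h (hpair i (Finset.mem_insert_of_mem hi) a (Finset.mem_insert_self a s') hia)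
      · exact h
    have := ih w (fun i hi => hp i (Finset.mem_insert_of_mem hi))
      (fun i hi j hj hij => hpair i (Finset.mem_insert_of_mem hi) j (Finset.mem_insert_of_mem hj) hij)
      hw'
    rw [Finset.prod_insert ha, hw]
    exact mul_dvd_mul_left (f a) this

lemma prime_X_sub_X {n : ℕ} {a b : Fin n} (hab : a ≠ b) :
    Prime (MvPolynomial.X a - MvPolynomial.X b : MvPolynomial (Fin n) ℤ) := by
  classical
  let ψ : MvPolynomial (Fin n) ℤ ≃ₐ[ℤ] Polynomial (MvPolynomial {i : Fin n // i ≠ b} ℤ) :=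
    (MvPolynomial.renameEquiv ℤ (Equiv.optionSubtypeNe b)).symm.trans
      (MvPolynomial.optionEquivLeft ℤ _)
  rw [← MulEquiv.prime_iff ψ]
  have h1 : ψ (MvPolynomial.X a - MvPolynomial.X b) =
      -(Polynomial.X - Polynomial.C (MvPolynomial.X ⟨a, hab⟩)) := by
    have ha' : ψ (MvPolynomial.X a) = Polynomial.C (MvPolynomial.X ⟨a, hab⟩) := by
      simp only [ψ, AlgEquiv.trans_apply, MvPolynomial.renameEquiv_symm, renameEquiv_apply,
        rename_X, Equiv.optionSubtypeNe_symm_of_ne hab, optionEquivLeft_X_some]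
    have hb' : ψ (MvPolynomial.X b) = Polynomial.X := by
      simp only [ψ, AlgEquiv.trans_apply, MvPolynomial.renameEquiv_symm, renameEquiv_apply,
        rename_X, Equiv.optionSubtypeNe_symm_self, optionEquivLeft_X_none]
    rw [map_sub, ha', hb']; ring
  have hp2 : Prime (ψ (MvPolynomial.X a - MvPolynomial.X b)) := by
    rw [h1]; exact (Polynomial.prime_X_sub_C _).neg
  exact hp2

lemma X_sub_X_dvd {n : ℕ} (a b : Fin n) (f : MvPolynomial (Fin n) ℤ)
    (h : MvPolynomial.aeval
      (fun i => if i = b then MvPolynomial.X a else MvPolynomial.X i : Fin n → MvPolynomial (Fin n) ℤ) f = 0) :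
    (MvPolynomial.X a - MvPolynomial.X b : MvPolynomial (Fin n) ℤ) ∣ f := by
  set g : Fin n → MvPolynomial (Fin n) ℤ := fun i => if i = b then MvPolynomial.X a else MvPolynomial.X i with hg
  set I := Ideal.span {(MvPolynomial.X a - MvPolynomial.X b : MvPolynomial (Fin n) ℤ)} with hI
  rw [← Ideal.mem_span_singleton]
  have key : (Ideal.Quotient.mkₐ ℤ I).comp (MvPolynomial.aeval g) = Ideal.Quotient.mkₐ ℤ I := by
    apply MvPolynomial.algHom_ext
    intro i
    simp only [AlgHom.comp_apply, aeval_X, Ideal.Quotient.mkₐ_eq_mk, hg]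
    split_ifs with hib
    · subst hib
      rw [Ideal.Quotient.eq]
      exact Ideal.mem_span_singleton_self _
    · rfl
  have hf := DFunLike.congr_fun key f
  simp only [AlgHom.comp_apply, Ideal.Quotient.mkₐ_eq_mk, h, map_zero] at hf
  exact Ideal.Quotient.eq_zero_iff_mem.mp hf.symm

lemma not_X_sub_X_dvd {n : ℕ} {a b c d : Fin n} (hcd : c ≠ d)
    (h1 : ¬(a = c ∧ b = d)) (h2 : ¬(a = d ∧ b = c)) :
    ¬ ((MvPolynomial.X a - MvPolynomial.X b : MvPolynomial (Fin n) ℤ) ∣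
      (MvPolynomial.X c - MvPolynomial.X d)) := by
  classical
  intro hdvd
  -- pick e ∈ {c,d} \ {a,b}
  have he : (c ≠ a ∧ c ≠ b) ∨ (d ≠ a ∧ d ≠ b) := by
    by_contra hcon
    push_neg at hcon
    obtain ⟨hc, hd⟩ := hcon
    rcases em (c = a) with h | h
    · rcases em (d = b) with h' | h'
      · exact h1 ⟨h.symm, h'.symm⟩
      · have hda : d = a := by by_contra hna; exact h' (hd hna)
        exact hcd (h.trans hda.symm)
    · have hcb : c = b := hc h
      rcases em (d = a) with h' | h'
      · exact h2 ⟨h'.symm, hcb.symm⟩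
      · exact hcd (hcb.trans (hd h').symm)
  obtain ⟨h3, h4⟩ | ⟨h3, h4⟩ := he
  · have := map_dvd (MvPolynomial.eval (fun i : Fin n => if i = c then (1 : ℤ) else 0)) hdvd
    simp only [map_sub, MvPolynomial.eval_X] at this
    simp [Ne.symm h3, Ne.symm h4, Ne.symm hcd] at this
  · have := map_dvd (MvPolynomial.eval (fun i : Fin n => if i = d then (1 : ℤ) else 0)) hdvd
    simp only [map_sub, MvPolynomial.eval_X] at this
    simp [Ne.symm h3, Ne.symm h4, hcd] at this

/-- Integrality of the restriction: for all `u, v ∈ I(d,n)` (strictly increasing `d`-tuples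
of integers from `{1, …, n}`), the Vandermonde product `VDM(v)` divides `D(u,v)` in
`R = ℤ[ε_1, …, ε_n]`. -/
theorem vdm_dvd_Ddet (n d : ℕ) (hd : 1 ≤ d) (hdn : d ≤ n) (u v : Fin d → ℕ)
    (hu : StrictMono u) (hu1 : ∀ i, 1 ≤ u i) (hun : ∀ i, u i ≤ n)
    (hv : StrictMono v) (hv1 : ∀ i, 1 ≤ v i) (hvn : ∀ i, v i ≤ n) :
    vdm n d v ∣ Ddet n d u v := by
  classical
  have hav' : ∀ i, v i - 1 < n := fun i => by have h1 := hv1 i; have h2 := hvn i; omega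
  set av : Fin d → Fin n := fun i => ⟨v i - 1, hav' i⟩ with hav
  have heps : ∀ i, eps n (v i) = MvPolynomial.X (av i) := fun i => by
    rw [eps, dif_pos ⟨hv1 i, hvn i⟩]
  have havinj : Function.Injective av := by
    intro i j hij
    apply hv.injective
    have h1i := hv1 i; have h1j := hv1 j
    have : v i - 1 = v j - 1 := congrArg Fin.val hij
    omega
  rw [vdm]
  apply prod_primes_dvd'
  · intro p hp
    have hlt : p.1 < p.2 := (Finset.mem_filter.mp hp).2
    rw [heps, heps]
    exact prime_X_sub_X fun h => (ne_of_gt hlt) (havinj h)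
  · intro p hp q hq hpq
    have hpf : p.1 < p.2 := (Finset.mem_filter.mp hp).2
    have hqf : q.1 < q.2 := (Finset.mem_filter.mp hq).2
    rw [heps, heps, heps, heps]
    apply not_X_sub_X_dvd
    · exact fun h => (ne_of_gt hqf) (havinj h)
    · rintro ⟨e1, e2⟩
      exact hpq (Prod.ext (havinj e2) (havinj e1))
    · rintro ⟨e1, e2⟩
      have : p.1 < p.1 := by
        calc p.1 < p.2 := hpf
        _ = q.1 := havinj e1
        _ < q.2 := hqf
        _ = p.1 := (havinj e2).symm
      exact lt_irrefl _ this
  · intro p hp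
    have hlt : p.1 < p.2 := (Finset.mem_filter.mp hp).2
    rw [heps, heps]
    apply X_sub_X_dvd (av p.2) (av p.1)
    set g : Fin n → MvPolynomial (Fin n) ℤ :=
      fun i => if i = av p.1 then MvPolynomial.X (av p.2) else MvPolynomial.X i with hg
    have hgeq : MvPolynomial.aeval g (eps n (v p.1)) = MvPolynomial.aeval g (eps n (v p.2)) := by
      rw [heps, heps, MvPolynomial.aeval_X, MvPolynomial.aeval_X]
      show (if av p.1 = av p.1 then X (av p.2) else X (av p.1)) =
        (if av p.2 = av p.1 then X (av p.2) else X (av p.2))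
      rw [if_pos rfl, if_neg fun h => (ne_of_gt hlt) (havinj h)]
    rw [Ddet, AlgHom.map_det]
    apply Matrix.det_zero_of_column_eq (ne_of_lt hlt)
    intro k
    simp only [AlgHom.mapMatrix_apply, Matrix.map_apply, Matrix.of_apply, mu, map_prod, map_sub]
    exact Finset.prod_congr rfl fun j _ => by rw [hgeq]

end
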